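/- Define, for real I ≥ 1, α*_2(I) = (1/(44I+22))·(9I² + 7I + 20 − √(81I⁴ + 126I³ + 409I² − 512I + 4)). Then the total second-round harvested share I·α*_2(I) tends to 0 as I → ∞ (in particular α*_2(I) → 0). -/

import Mathlib

open Filter

/-- The discriminant `81I⁴ + 126I³ + 409I² − 512I + 4`. -/
noncomputable def gameDisc (I : ℝ) : ℝ :=
  81 * I ^ 4 + 126 * I ^ 3 + 409 * I ^ 2 - 512 * I + 4

/-- The symmetric equilibrium second-round share with `I` players
(for `w₁ = 1`, `w₂ = 11/9`). -/
noncomputable def alpha2Eq (I : ℝ) : ℝ :=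
  1 / (44 * I + 22) * (9 * I ^ 2 + 7 * I + 20 - Real.sqrt (gameDisc I))

lemma gameDisc_nonneg {I : ℝ} (hI : 1 ≤ I) : 0 ≤ gameDisc I := by
  unfold gameDisc; nlinarith [sq_nonneg I, sq_nonneg (I-1), sq_nonneg (I^2-1)]

lemma alpha2Eq_rat {I : ℝ} (hI : 1 ≤ I) :
    alpha2Eq I = 18 / (9 * I ^ 2 + 7 * I + 20 + Real.sqrt (gameDisc I)) := by
  have hs : Real.sqrt (gameDisc I) ^ 2 = gameDisc I := Real.sq_sqrt (gameDisc_nonneg hI)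
  have hsn : 0 ≤ Real.sqrt (gameDisc I) := Real.sqrt_nonneg _
  have hd1 : (44 : ℝ) * I + 22 ≠ 0 := by positivity
  have hd2 : 9 * I ^ 2 + 7 * I + 20 + Real.sqrt (gameDisc I) ≠ 0 := by positivity
  unfold gameDisc at hs
  unfold alpha2Eq gameDisc
  field_simp
  ring_nf at hs ⊢
  linear_combination -hs

lemma alpha2Eq_bounds {I : ℝ} (hI : 1 ≤ I) :
    0 ≤ alpha2Eq I ∧ I * alpha2Eq I ≤ 2 / I := by
  have hsn : 0 ≤ Real.sqrt (gameDisc I) := Real.sqrt_nonneg _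
  have hden : (0:ℝ) < 9 * I ^ 2 + 7 * I + 20 + Real.sqrt (gameDisc I) := by positivity
  rw [alpha2Eq_rat hI]
  constructor
  · positivity
  · rw [mul_div_assoc', div_le_div_iff₀ hden (by linarith : (0:ℝ) < I)]
    nlinarith [sq_nonneg I]

/-- nothing is left for round 2, Section 4.1.
The total second-round harvested share `I·α₂*(I)` tends to `0` as `I → ∞`;
in particular `α₂*(I) → 0`. -/
theorem total_second_round_share_tendsto_zero :
    Tendsto (fun I : ℝ => I * alpha2Eq I) atTop (nhds 0) ∧
      Tendsto alpha2Eq atTop (nhds 0) := by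
  have h2I : Tendsto (fun I : ℝ => 2 / I) atTop (nhds 0) :=
    tendsto_const_nhds.div_atTop tendsto_id
  have h1 : Tendsto (fun I : ℝ => I * alpha2Eq I) atTop (nhds 0) := by
    refine tendsto_of_tendsto_of_tendsto_of_le_of_le' tendsto_const_nhds h2I ?_ ?_
    · filter_upwards [eventually_ge_atTop (1:ℝ)] with I hI
      have h := (alpha2Eq_bounds hI).1
      nlinarith
    · filter_upwards [eventually_ge_atTop (1:ℝ)] with I hI
      exact (alpha2Eq_bounds hI).2
  refine ⟨h1, ?_⟩
  refine tendsto_of_tendsto_of_tendsto_of_le_of_le' tendsto_const_nhds h1 ?_ ?_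
  · filter_upwards [eventually_ge_atTop (1:ℝ)] with I hI
    exact (alpha2Eq_bounds hI).1
  · filter_upwards [eventually_ge_atTop (1:ℝ)] with I hI
    have h := (alpha2Eq_bounds hI).1
    nlinarith
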